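/- arXiv:2605.05904 — 2 statements merged into one kernel-verified Lean document; each statement's English description precedes it below -/
import Mathlib

section
/- Let ε>0, λ = (−ε+√(ε²+4))/2 (so that λ(ε+λ)=1), γ = N(0,1), φ(z) = −(ε/2)·log(ε/(ε+λ)) − z²/(2(ε+λ)) and ζ(y) = −λy²/2. Then (φ,ζ) solves the Schrödinger system with F = Id: ∫_ℝ exp((yz+φ(z))/ε) γ(dz) = exp(−ζ(y)/ε) for all y∈ℝ, and ∫_ℝ exp((yz+ζ(y))/ε) γ(dy) = exp(−φ(z)/ε) for all z∈ℝ. -/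
open MeasureTheory Set Filter Topology ProbabilityTheory Real
open scoped ENNReal NNReal

noncomputable section

lemma integral_rexp_quadratic' {b : ℝ} (hb : 0 < b) (c : ℝ) :
    ∫ x : ℝ, Real.exp (c * x - b * x ^ 2) = Real.sqrt (π / b) * Real.exp (c ^ 2 / (4 * b)) := by
  have key : ∀ x : ℝ, c * x - b * x ^ 2 = -b * (x - c / (2 * b)) ^ 2 + c ^ 2 / (4 * b) := by
    intro x; field_simp; try ring
  simp_rw [key, Real.exp_add]
  rw [integral_mul_const,
    integral_sub_right_eq_self (μ := volume) (fun x : ℝ => Real.exp (-b * x ^ 2)) (c / (2 * b)),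
    integral_gaussian]

lemma integral_exp_gaussianReal (b c : ℝ) (hb : 0 ≤ b) :
    ∫ x, Real.exp (c * x - b * x ^ 2 / 2) ∂(gaussianReal 0 1)
      = Real.exp (c ^ 2 / (2 * (1 + b))) / Real.sqrt (1 + b) := by
  have h1b : (0:ℝ) < 1 + b := by linarith
  rw [gaussianReal_of_var_ne_zero _ one_ne_zero]
  have hpdf : (gaussianPDF 0 1) = fun x => ((Real.toNNReal (gaussianPDFReal 0 1 x) : ℝ≥0) : ℝ≥0∞) := by
    ext x; rfl
  rw [hpdf, integral_withDensity_eq_integral_smul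
    ((measurable_gaussianPDFReal 0 1).real_toNNReal) _]
  have heq : ∀ x : ℝ, (Real.toNNReal (gaussianPDFReal 0 1 x) : ℝ≥0) • Real.exp (c * x - b * x ^ 2 / 2)
      = (Real.sqrt (2 * π))⁻¹ * Real.exp (c * x - ((1 + b) / 2) * x ^ 2) := by
    intro x
    rw [NNReal.smul_def, smul_eq_mul, Real.coe_toNNReal _ (gaussianPDFReal_nonneg 0 1 x)]
    simp only [gaussianPDFReal, NNReal.coe_one, mul_one, sub_zero, one_div]
    rw [mul_assoc, ← Real.exp_add]
    congr 1
    ring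
  simp_rw [heq]
  rw [integral_const_mul, integral_rexp_quadratic' (by linarith) c]
  have h2 : π / ((1 + b) / 2) = 2 * π / (1 + b) := by
    rw [div_div_eq_mul_div]; ring
  have h4 : c ^ 2 / (4 * ((1 + b) / 2)) = c ^ 2 / (2 * (1 + b)) := by
    congr 1; ring
  rw [h2, h4, Real.sqrt_div (by positivity : (0:ℝ) ≤ 2 * π) (1 + b)]
  have h2π : (0:ℝ) < Real.sqrt (2 * π) := Real.sqrt_pos.mpr (by positivity)
  field_simp

/-- The explicit Gaussian pair `(φ, ζ)` solves the Schrödinger system with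
`F = Id`, `ε > 0` and both marginals standard normal. -/
theorem gaussian_schrodinger_system_explicit_solution
    (ε : ℝ) (hε : 0 < ε)
    (lam : ℝ) (hlam : lam = (-ε + Real.sqrt (ε ^ 2 + 4)) / 2)
    (φ ζ : ℝ → ℝ)
    (hφ : φ = fun z : ℝ => -(ε / 2) * Real.log (ε / (ε + lam)) - z ^ 2 / (2 * (ε + lam)))
    (hζ : ζ = fun y : ℝ => -(lam * y ^ 2) / 2) :
    (∀ y : ℝ,
      ∫ z, Real.exp ((y * z + φ z) / ε) ∂(gaussianReal 0 1) = Real.exp (-ζ y / ε)) ∧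
    (∀ z : ℝ,
      ∫ y, Real.exp ((y * z + ζ y) / ε) ∂(gaussianReal 0 1) = Real.exp (-φ z / ε)) := by
  have hs : Real.sqrt (ε ^ 2 + 4) ^ 2 = ε ^ 2 + 4 := Real.sq_sqrt (by positivity)
  have hsn : 0 ≤ Real.sqrt (ε ^ 2 + 4) := Real.sqrt_nonneg _
  have hlam0 : 0 < lam := by rw [hlam]; nlinarith
  have hmul : lam * (ε + lam) = 1 := by rw [hlam]; nlinarith
  have hεl : 0 < ε + lam := by linarith
  have hrpos : (0:ℝ) < (ε + lam) / ε := by positivity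
  constructor
  · intro y
    have key : ∀ z : ℝ, (y * z + φ z) / ε
        = Real.log (Real.sqrt ((ε + lam) / ε)) + ((y / ε) * z - (1 / (ε * (ε + lam))) * z ^ 2 / 2) := by
      intro z
      rw [hφ]
      have hlog : Real.log (ε / (ε + lam)) = - Real.log ((ε + lam) / ε) := by
        rw [← Real.log_inv]; congr 1; field_simp
      have hsqrt : Real.log (Real.sqrt ((ε + lam) / ε)) = Real.log ((ε + lam) / ε) / 2 := by
        rw [Real.log_sqrt (le_of_lt hrpos)]
      simp only [hlog, hsqrt]
      field_simp
      ring
    simp_rw [key, Real.exp_add, Real.exp_log (Real.sqrt_pos.mpr hrpos)]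
    rw [integral_const_mul, integral_exp_gaussianReal _ _ (by positivity)]
    have h1b : 1 + 1 / (ε * (ε + lam)) = (ε + lam) / ε := by
      field_simp
      nlinarith
    rw [h1b]
    have hexp : (y / ε) ^ 2 / (2 * ((ε + lam) / ε)) = -ζ y / ε := by
      rw [hζ]
      field_simp
      linear_combination (-(y^2)) * hmul
    rw [hexp]
    field_simp
  · intro z
    have key : ∀ y : ℝ, (y * z + ζ y) / ε
        = ((z / ε) * y - (lam / ε) * y ^ 2 / 2) := by
      intro y; rw [hζ]; field_simp; try ring
    simp_rw [key]
    rw [integral_exp_gaussianReal _ _ (by positivity)]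
    have h1b : 1 + lam / ε = (ε + lam) / ε := by field_simp; try ring
    rw [h1b]
    have hφz : -φ z / ε = Real.log (Real.sqrt (ε / (ε + lam)))
        + (z / ε) ^ 2 / (2 * ((ε + lam) / ε)) := by
      rw [hφ, Real.log_sqrt (by positivity)]
      field_simp
      try ring
    rw [hφz, Real.exp_add, Real.exp_log (Real.sqrt_pos.mpr (by positivity))]
    have hio : Real.sqrt ((ε + lam) / ε) = (Real.sqrt (ε / (ε + lam)))⁻¹ := by
      rw [← Real.sqrt_inv]; congr 1; field_simp
    rw [hio, div_eq_mul_inv, inv_inv]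
    ring

end
end

section
/- Let ε>0, λ = (−ε+√(ε²+4))/2, φ(z) = −(ε/2)·log(ε/(ε+λ)) − z²/(2(ε+λ)), ζ(u) = −λu²/2, and for t∈[0,1), y∈ℝ, z∈ℝ define ρ^ε(t,y,z) = ∫_ℝ exp((uz+φ(z)+ζ(u))/ε) (2π(1−t))^{−1/2} exp(−(y−u)²/(2(1−t))) du. Then the logarithmic derivative in y satisfies ρ^ε_y(t,y,z)/ρ^ε(t,y,z) = λ(z − λy)/(1 − tλ²); moreover, as ε→0 one has λ→1, so this drift converges pointwise (for t<1) to the Brownian-bridge drift (z−y)/(1−t) of the classical Kyle equilibrium. -/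
open MeasureTheory Set Filter Topology ProbabilityTheory
open scoped ENNReal NNReal

noncomputable section

lemma integral_rexp_quad {b : ℝ} (hb : b < 0) (c d : ℝ) :
    ∫ x : ℝ, Real.exp (b * x ^ 2 + c * x + d)
      = Real.sqrt (Real.pi / (-b)) * Real.exp (d - c ^ 2 / (4 * b)) := by
  have hb' : b ≠ 0 := ne_of_lt hb
  have h : ∀ x : ℝ, b * x ^ 2 + c * x + d
      = b * (x + c / (2 * b)) ^ 2 + (d - c ^ 2 / (4 * b)) := by
    intro x; field_simp; ring
  simp_rw [h, Real.exp_add, integral_mul_const]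
  rw [integral_add_right_eq_self (fun x : ℝ => Real.exp (b * x ^ 2)) (c / (2 * b))]
  have : ∀ x : ℝ, b * x ^ 2 = -(-b) * x ^ 2 := by intro x; ring
  simp_rw [this, integral_gaussian]

/-- In the Gaussian Kyle model with quadratic transaction costs and `F = Id`,
the logarithmic derivative of `ρ^ε` in `y` equals `λ(z − λy)/(1 − tλ²)`; moreover `λ → 1` as
`ε → 0⁺`, so this drift converges pointwise (for `t < 1`) to the Brownian-bridge drift
`(z − y)/(1 − t)` of the classical Kyle equilibrium. -/
theorem gaussian_kyle_drift_and_limit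
    (lam : ℝ → ℝ) (hlam : lam = fun ε => (-ε + Real.sqrt (ε ^ 2 + 4)) / 2)
    (φ ζ : ℝ → ℝ → ℝ)
    (hφ : φ = fun ε z => -(ε / 2) * Real.log (ε / (ε + lam ε)) - z ^ 2 / (2 * (ε + lam ε)))
    (hζ : ζ = fun ε u => -(lam ε * u ^ 2) / 2)
    (ρ : ℝ → ℝ → ℝ → ℝ → ℝ)
    (hρ : ρ = fun ε t y z => ∫ u : ℝ,
        Real.exp ((u * z + φ ε z + ζ ε u) / ε) *
          ((2 * Real.pi * (1 - t)) ^ (-(1:ℝ)/2) * Real.exp (-(y - u) ^ 2 / (2 * (1 - t))))) :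
    (∀ ε : ℝ, 0 < ε → ∀ t ∈ Ico (0:ℝ) 1, ∀ y z : ℝ,
      deriv (fun y' => ρ ε t y' z) y / ρ ε t y z
        = lam ε * (z - lam ε * y) / (1 - t * lam ε ^ 2)) ∧
    Tendsto lam (𝓝[>] (0:ℝ)) (𝓝 1) ∧
    (∀ t ∈ Ico (0:ℝ) 1, ∀ y z : ℝ,
      Tendsto (fun ε => lam ε * (z - lam ε * y) / (1 - t * lam ε ^ 2))
        (𝓝[>] (0:ℝ)) (𝓝 ((z - y) / (1 - t)))) := by
  have hlam1 : Tendsto lam (nhdsWithin 0 (Ioi (0:ℝ))) (nhds 1) := by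
    have hc : Continuous lam := by
      rw [hlam]
      exact ((continuous_neg.add ((continuous_pow 2).add continuous_const).sqrt).div_const 2)
    have h0 : lam 0 = 1 := by
      rw [hlam]
      norm_num
    have := hc.continuousAt (x := (0:ℝ))
    rw [ContinuousAt, h0] at this
    exact this.mono_left nhdsWithin_le_nhds
  refine ⟨?_, hlam1, ?_⟩
  ·
    intro ε hε t ht y z
    have hε' : ε ≠ 0 := ne_of_gt hε
    have h1t : (0:ℝ) < 1 - t := by linarith [ht.2]
    have h1t' : (1:ℝ) - t ≠ 0 := ne_of_gt h1t
    set L : ℝ := lam ε with hL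
    have hS : Real.sqrt (ε ^ 2 + 4) ^ 2 = ε ^ 2 + 4 := Real.sq_sqrt (by positivity)
    have hLpos : 0 < L := by
      rw [hL, hlam]
      have : ε < Real.sqrt (ε ^ 2 + 4) := (Real.lt_sqrt hε.le).mpr (by linarith)
      simp only
      linarith
    have hL2 : L ^ 2 + ε * L = 1 := by
      rw [hL, hlam]; simp only; linear_combination hS / 4
    set b : ℝ := -(L / (2 * ε) + 1 / (2 * (1 - t))) with hbdef
    have hbneg : b < 0 := by
      rw [hbdef]
      have : 0 < L / (2 * ε) + 1 / (2 * (1 - t)) := by positivity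
      linarith
    have hb' : b ≠ 0 := ne_of_lt hbneg
    set K : ℝ := (2 * Real.pi * (1 - t)) ^ (-(1:ℝ)/2) * Real.sqrt (Real.pi / (-b)) with hKdef
    have hKpos : 0 < K := by
      rw [hKdef]
      have h1 : (0:ℝ) < 2 * Real.pi * (1 - t) := by positivity
      have h2 : (0:ℝ) < Real.pi / (-b) := by
        apply div_pos Real.pi_pos; linarith
      positivity
    set H : ℝ → ℝ := fun y' =>
      φ ε z / ε - y' ^ 2 / (2 * (1 - t)) - (z / ε + y' / (1 - t)) ^ 2 / (4 * b) with hHdef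
    have hclosed : ∀ y' : ℝ, ρ ε t y' z = K * Real.exp (H y') := by
      intro y'
      rw [hρ]
      simp only
      have hint : ∀ u : ℝ,
          Real.exp ((u * z + φ ε z + ζ ε u) / ε) *
            ((2 * Real.pi * (1 - t)) ^ (-(1:ℝ)/2) * Real.exp (-(y' - u) ^ 2 / (2 * (1 - t))))
          = (2 * Real.pi * (1 - t)) ^ (-(1:ℝ)/2) *
              Real.exp (b * u ^ 2 + (z / ε + y' / (1 - t)) * u +
                (φ ε z / ε - y' ^ 2 / (2 * (1 - t)))) := by
        intro u
        rw [hζ]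
        simp only
        rw [mul_left_comm, ← Real.exp_add]
        congr 1
        rw [Real.exp_eq_exp]
        rw [hbdef]
        field_simp
        ring
      simp_rw [hint]
      rw [integral_const_mul, integral_rexp_quad hbneg]
      rw [hKdef, hHdef]
      ring
    have d1 : HasDerivAt (fun y' : ℝ => y' ^ 2) (2 * y) y := by
      simpa using hasDerivAt_pow 2 y
    have d2 : HasDerivAt (fun y' : ℝ => z / ε + y' / (1 - t)) (1 / (1 - t)) y := by
      simpa using ((hasDerivAt_id y).div_const (1 - t)).const_add (z / ε)
    have d3 : HasDerivAt (fun y' : ℝ => (z / ε + y' / (1 - t)) ^ 2)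
        (2 * (z / ε + y / (1 - t)) * (1 / (1 - t))) y := by
      simpa using d2.fun_pow 2
    set D : ℝ := -(2 * y / (2 * (1 - t))) - 2 * (z / ε + y / (1 - t)) * (1 / (1 - t)) / (4 * b)
      with hDdef
    have dH : HasDerivAt H D y := by
      rw [hHdef, hDdef]
      have := ((hasDerivAt_const y (φ ε z / ε)).sub (d1.div_const (2 * (1 - t)))).sub
        (d3.div_const (4 * b))
      refine this.congr_deriv ?_
      ring
    have dF : HasDerivAt (fun y' => K * Real.exp (H y')) (K * (Real.exp (H y) * D)) y :=
      (dH.exp).const_mul K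
    have hfun : (fun y' => ρ ε t y' z) = fun y' => K * Real.exp (H y') := funext hclosed
    rw [hfun, dF.deriv, hclosed y]
    have hKE : K * Real.exp (H y) ≠ 0 := by positivity
    rw [show K * (Real.exp (H y) * D) = D * (K * Real.exp (H y)) by ring,
      mul_div_assoc, div_self hKE, mul_one]
    have hden : L * (1 - t) + ε > 0 := by positivity
    have h1tL : 1 - t * L ^ 2 ≠ 0 := by nlinarith [ht.1, ht.2]
    have step1 : D = (z - L * y) / (L * (1 - t) + ε) := by
      have hmul : (4 * b) * (-(ε * (1 - t) / (2 * (L * (1 - t) + ε)))) = 1 := by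
        rw [hbdef]; field_simp [hden.ne']; ring
      have hbinv : (4 * b)⁻¹ = -(ε * (1 - t) / (2 * (L * (1 - t) + ε))) :=
        inv_eq_of_mul_eq_one_right hmul
      rw [hDdef, div_eq_mul_inv (2 * (z / ε + y / (1 - t)) * (1 / (1 - t))), hbinv,
        eq_div_iff (ne_of_gt hden)]
      field_simp
      ring
    rw [step1, div_eq_div_iff (ne_of_gt hden) h1tL]
    linear_combination (L * y - z) * hL2
  · intro t ht y z
    have h1t : (1:ℝ) - t ≠ 0 := by
      have := ht.2; intro h; linarith [ht.2, (by linarith : t = 1)]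
    have hgc : ContinuousAt (fun l : ℝ => l * (z - l * y) / (1 - t * l ^ 2)) 1 := by
      apply ContinuousAt.div
      · fun_prop
      · fun_prop
      · simp only [one_pow, mul_one]
        exact h1t
    have := hgc.tendsto.comp hlam1
    simpa [Function.comp_def] using this


end
end
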